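/- For all n, m ≥ 0, the cardinalities of the pairwise sums of trees add up to a Catalan number: Σ_{x ∈ Y_n, y ∈ Y_m} card(x + y) = c_{n+m}, where c_k = (2k)!/(k!(k+1)!) is the k-th Catalan number. -/

import Mathlib

/-- A planar binary tree: a leaf `|` or a grafting `x ∨ y`. -/
inductive PBT : Type
  | leaf : PBT
  | node : PBT → PBT → PBT
  deriving DecidableEq

namespace PBT

/-- The degree: number of internal vertices. -/
def deg : PBT → ℕ
  | leaf => 0
  | node l r => deg l + deg r + 1

/-- The set `Y n` of planar binary trees of degree `n`. -/
def Y (n : ℕ) : Set PBT := {t | t.deg = n}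

/-- The `over` operation `x / y`. -/
def overT : PBT → PBT → PBT
  | x, leaf => x
  | x, node yl yr => node (overT x yl) yr

/-- The `under` operation `x \ y`. -/
def under : PBT → PBT → PBT
  | leaf, y => y
  | node xl xr, y => node xl (under xr y)

/-- The Tamari order, generated by `(x ∨ y) ∨ z ≤ x ∨ (y ∨ z)` and compatibility
with grafting on both sides. -/
inductive tle : PBT → PBT → Prop
  | refl (x : PBT) : tle x x
  | trans {x y z : PBT} : tle x y → tle y z → tle x z
  | rotate (x y z : PBT) : tle (node (node x y) z) (node x (node y z))
  | node_left {x y : PBT} (z : PBT) : tle x y → tle (node x z) (node y z)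
  | node_right {x y : PBT} (z : PBT) : tle x y → tle (node z x) (node z y)

/-- The sum of two planar binary trees: the Tamari interval `[x/y, x\y]`
(a subset of `Y (deg x + deg y)`). -/
def sum (x y : PBT) : Set PBT := {z | tle (overT x y) z ∧ tle z (under x y)}

/-- A grove of degree `n`: a nonempty subset of `Y n`. -/
def Grove (n : ℕ) (A : Set PBT) : Prop := A.Nonempty ∧ ∀ x ∈ A, x.deg = n

/-- The sum of groves. -/
def gsum (A B : Set PBT) : Set PBT := ⋃ x ∈ A, ⋃ y ∈ B, sum x y

/-- The reflection involution σ. -/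
def σ : PBT → PBT
  | leaf => leaf
  | node l r => node (σ r) (σ l)

/-- The left sum `x ⊣ y` of trees (with the conventions `x ⊣ | = {x}`, `| ⊣ y = {|}`). -/
def lsum : PBT → PBT → Set PBT
  | x, leaf => {x}
  | leaf, _ => {leaf}
  | node xl xr, y => (fun z => node xl z) '' sum xr y

/-- The right sum `x ⊢ y` of trees (with the conventions `| ⊢ y = {y}`, `x ⊢ | = {|}`). -/
def rsum : PBT → PBT → Set PBT
  | leaf, y => {y}
  | _, leaf => {leaf}
  | x, node yl yr => (fun z => node z yr) '' sum x yl

/-- Left sum of groves. -/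
def glsum (A B : Set PBT) : Set PBT := ⋃ x ∈ A, ⋃ y ∈ B, lsum x y

/-- Right sum of groves. -/
def grsum (A B : Set PBT) : Set PBT := ⋃ x ∈ A, ⋃ y ∈ B, rsum x y

/-- Multiplication of a tree by a grove:
`| × B = {|}` and `(xˡ ∨ xʳ) × B = ((xˡ × B) ⊢ B) ⊣ (xʳ × B)`.
(The conventions `{|} ⊢ B = B` and `A ⊣ {|} = A` are built into `rsum`/`lsum`.) -/
def tmul : PBT → Set PBT → Set PBT
  | leaf, _ => {leaf}
  | node l r, B => glsum (grsum (tmul l B) B) (tmul r B)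

/-- Multiplication of groves. -/
def gmul (A B : Set PBT) : Set PBT := ⋃ x ∈ A, tmul x B
-- ===== auxiliary development =====

lemma deg_over (x y : PBT) : deg (overT x y) = deg x + deg y := by
  induction y with
  | leaf => simp [overT, deg]
  | node yl yr ihl ihr => simp [overT, deg, ihl]; omega

lemma deg_under (x y : PBT) : deg (under x y) = deg x + deg y := by
  induction x with
  | leaf => simp [under, deg]
  | node xl xr ihl ihr => simp [under, deg, ihr]; omega

lemma leaf_over (y : PBT) : overT leaf y = y := by
  induction y with
  | leaf => rfl
  | node yl yr ihl ihr => simp [overT, ihl]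

lemma under_leaf (x : PBT) : under x leaf = x := by
  induction x with
  | leaf => rfl
  | node xl xr ihl ihr => simp [under, ihr]

lemma deg_eq_zero_iff {t : PBT} : deg t = 0 ↔ t = leaf := by
  cases t <;> simp [deg]

/-- Infix vector of left-subtree sizes. -/
def toVec : PBT → List ℕ
  | leaf => []
  | node l r => toVec l ++ deg l :: toVec r

lemma length_toVec (t : PBT) : (toVec t).length = deg t := by
  induction t with
  | leaf => rfl
  | node l r ihl ihr => simp [toVec, deg, ihl, ihr]; omega

lemma getD_split (u v : List ℕ) (a i : ℕ) :
    (u ++ a :: v).getD i 0 =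
      if i < u.length then u.getD i 0
      else if i = u.length then a
      else v.getD (i - u.length - 1) 0 := by
  rcases lt_trichotomy i u.length with h | h | h
  · rw [List.getD_append _ _ _ _ h, if_pos h]
  · subst h
    rw [List.getD_append_right _ _ _ _ le_rfl]
    simp
  · rw [List.getD_append_right _ _ _ _ h.le, if_neg (by omega), if_neg (by omega)]
    obtain ⟨k, hk⟩ : ∃ k, i - u.length = k + 1 := ⟨i - u.length - 1, by omega⟩
    rw [hk, List.getD_cons_succ]
    simp

lemma vecA : ∀ (t : PBT) (i : ℕ), (toVec t).getD i 0 ≤ i := by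
  intro t
  induction t with
  | leaf => intro i; simp [toVec]
  | node l r ihl ihr =>
    intro i
    rw [toVec, getD_split]
    split_ifs with h1 h2
    · exact ihl i
    · rw [length_toVec] at h2; omega
    · rw [length_toVec] at h1 h2
      exact le_trans (ihr _) (by omega)

lemma vecStrict (l r : PBT) (j : ℕ) (h : deg l < j) :
    (toVec (node l r)).getD j 0 < j := by
  rw [toVec, getD_split]
  rw [length_toVec]
  split_ifs with h1 h2
  · omega
  · omega
  · exact lt_of_le_of_lt (le_trans (vecA r _) (by omega : j - deg l - 1 ≤ j - 1)) (by omega)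

lemma toVec_inj : ∀ {u v : PBT}, toVec u = toVec v → u = v := by
  intro u
  induction u with
  | leaf =>
    intro v h
    cases v with
    | leaf => rfl
    | node vl vr =>
      exfalso
      have := congrArg List.length h
      simp [toVec, length_toVec] at this
  | node ul ur ihl ihr =>
    intro v h
    cases v with
    | leaf =>
      exfalso
      have := congrArg List.length h
      simp [toVec, length_toVec] at this
    | node vl vr =>
      -- first: deg ul = deg vl
      have hd : deg ul = deg vl := by
        by_contra hne
        rcases lt_or_gt_of_ne hne with hlt | hlt
        · have h1 : (toVec (node ul ur)).getD (deg vl) 0 < deg vl := vecStrict ul ur _ hlt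
          have h2 : (toVec (node vl vr)).getD (deg vl) 0 = deg vl := by
            rw [toVec, getD_split, length_toVec, if_neg (lt_irrefl _), if_pos rfl]
          rw [h] at h1; omega
        · have h1 : (toVec (node vl vr)).getD (deg ul) 0 < deg ul := vecStrict vl vr _ hlt
          have h2 : (toVec (node ul ur)).getD (deg ul) 0 = deg ul := by
            rw [toVec, getD_split, length_toVec, if_neg (lt_irrefl _), if_pos rfl]
          rw [h] at h2; omega
      rw [toVec, toVec] at h
      have hlen : (toVec ul).length = (toVec vl).length := by
        rw [length_toVec, length_toVec, hd]
      have h2 := List.append_inj h hlen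
      obtain ⟨hL, hR⟩ := h2
      have hR' : toVec ur = toVec vr := by
        injection hR
      rw [ihl hL, ihr hR']

lemma under_toVec : ∀ (s t : PBT), toVec (under s t) = toVec s ++ toVec t := by
  intro s
  induction s with
  | leaf => intro t; simp [under, toVec]
  | node a b ihl ihr =>
    intro t
    simp [under, toVec, ihr]

lemma over_toVec_pre : ∀ (y x : PBT), ∃ w, toVec (overT x y) = toVec x ++ w := by
  intro y
  induction y with
  | leaf => intro x; exact ⟨[], by simp [overT]⟩
  | node yl yr ihl ihr =>
    intro x
    obtain ⟨w', hw'⟩ := ihl x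
    exact ⟨w' ++ deg (overT x yl) :: toVec yr, by simp [overT, toVec, hw']⟩

/-- Key decomposition of the vector of `over (node L R) S`. -/
lemma over_toVec_G : ∀ (S L R : PBT), ∃ w : List ℕ,
    toVec (overT (node L R) S) = toVec L ++ deg L :: w ∧
    ∀ i, w.getD i 0 = (toVec (overT R S)).getD i 0 ∨ (toVec (overT R S)).getD i 0 = i := by
  intro S
  induction S with
  | leaf =>
    intro L R
    refine ⟨toVec R, by simp [overT, toVec], fun i => Or.inl (by simp [overT])⟩
  | node Sl Sr ihl ihr =>
    intro L R
    obtain ⟨w', hw', hp⟩ := ihl L R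
    refine ⟨w' ++ deg (overT (node L R) Sl) :: toVec Sr, by simp [overT, toVec, hw'], ?_⟩
    intro i
    have hlw' : w'.length = deg R + deg Sl := by
      have := congrArg List.length hw'
      simp only [List.length_append, List.length_cons, length_toVec, deg_over, deg] at this
      omega
    have hoRS : toVec (overT R (node Sl Sr)) = toVec (overT R Sl) ++ (deg R + deg Sl) :: toVec Sr := by
      simp [overT, toVec, deg_over]
    have hlen2 : (toVec (overT R Sl)).length = deg R + deg Sl := by
      rw [length_toVec, deg_over]
    rw [hoRS, getD_split, getD_split, hlw', hlen2]
    split_ifs with h1 h2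
    · exact hp i
    · right; omega
    · left; rfl

/-- If the vector of `u` has a "diagonal" entry at `p`, then `u` splits along its
left spine at a block of size `p`. -/
lemma spine : ∀ (u : PBT) (p : ℕ), p < deg u → (toVec u).getD p 0 = p →
    ∃ L R S, u = overT (node L R) S ∧ deg L = p := by
  intro u
  induction u with
  | leaf => intro p h; simp [deg] at h
  | node ul ur ihl ihr =>
    intro p hp hdiag
    rcases lt_trichotomy p (deg ul) with h | h | h
    · have : (toVec ul).getD p 0 = p := by
        rw [toVec, getD_split, length_toVec, if_pos h] at hdiag
        exact hdiag
      obtain ⟨L, R, S, hu, hL⟩ := ihl p h this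
      exact ⟨L, R, node S ur, by simp [overT, ← hu], hL⟩
    · exact ⟨ul, ur, leaf, rfl, h.symm⟩
    · have := vecStrict ul ur p h
      omega

lemma tle_deg {u v : PBT} (h : tle u v) : deg u = deg v := by
  induction h with
  | refl => rfl
  | trans _ _ ih1 ih2 => omega
  | rotate x y z => simp [deg]; omega
  | node_left z _ ih => simp [deg]; omega
  | node_right z _ ih => simp [deg]; omega

lemma ptwise_append {u u' w w' : List ℕ} {a a' : ℕ}
    (hlen : u.length = u'.length)
    (hu : ∀ i, u'.getD i 0 ≤ u.getD i 0) (hw : ∀ i, w'.getD i 0 ≤ w.getD i 0)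
    (ha : a' ≤ a) (i : ℕ) :
    (u' ++ a' :: w').getD i 0 ≤ (u ++ a :: w).getD i 0 := by
  rw [getD_split, getD_split, hlen]
  split_ifs with h1 h2
  · exact hu i
  · exact ha
  · exact hw _

lemma ptwise_split {u u' w w' : List ℕ} {a a' : ℕ}
    (hlen : u.length = u'.length)
    (h : ∀ i, (u' ++ a' :: w').getD i 0 ≤ (u ++ a :: w).getD i 0) :
    (∀ i, u'.getD i 0 ≤ u.getD i 0) ∧ a' ≤ a ∧ (∀ i, w'.getD i 0 ≤ w.getD i 0) := by
  refine ⟨fun i => ?_, ?_, fun i => ?_⟩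
  · by_cases hi : i < u'.length
    · have := h i
      rw [getD_split, getD_split, hlen] at this
      simp only [if_pos hi] at this
      exact this
    · rw [List.getD_eq_default _ _ (by omega)]
      exact Nat.zero_le _
  · have := h u'.length
    rw [getD_split, getD_split, hlen] at this
    simpa using this
  · have := h (u'.length + 1 + i)
    rw [getD_split, getD_split, hlen] at this
    have hc1 : ¬(u'.length + 1 + i < u'.length) := by omega
    have hc2 : ¬(u'.length + 1 + i = u'.length) := by omega
    simp only [if_neg hc1, if_neg hc2] at this
    have e : u'.length + 1 + i - u'.length - 1 = i := by omega
    rw [e] at this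
    exact this

lemma tle_vec {u v : PBT} (h : tle u v) :
    ∀ i, (toVec v).getD i 0 ≤ (toVec u).getD i 0 := by
  induction h with
  | refl => intro i; exact le_rfl
  | trans _ _ ih1 ih2 => intro i; exact le_trans (ih2 i) (ih1 i)
  | rotate x y z =>
    intro i
    have h1 : toVec (node (node x y) z) =
        toVec x ++ deg x :: (toVec y ++ (deg x + deg y + 1) :: toVec z) := by
      simp [toVec, deg]
    have h2 : toVec (node x (node y z)) =
        toVec x ++ deg x :: (toVec y ++ deg y :: toVec z) := by
      simp [toVec]
    rw [h1, h2]
    refine ptwise_append rfl (fun _ => le_rfl) ?_ le_rfl i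
    intro j
    exact ptwise_append rfl (fun _ => le_rfl) (fun _ => le_rfl) (by omega) j
  | @node_left x y z hxy ih =>
    intro i
    rw [toVec, toVec]
    exact ptwise_append (by rw [length_toVec, length_toVec, tle_deg hxy])
      ih (fun _ => le_rfl) (le_of_eq (tle_deg hxy).symm) i
  | @node_right x y z hxy ih =>
    intro i
    rw [toVec, toVec]
    exact ptwise_append rfl (fun _ => le_rfl) ih le_rfl i

lemma over_node_le (a b : PBT) : ∀ c, tle (overT (node a b) c) (node a (overT b c)) := by
  intro c
  induction c with
  | leaf => exact tle.refl _
  | node cl cr ihl ihr =>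
    have h1 : tle (overT (node a b) (node cl cr)) (node (node a (overT b cl)) cr) := by
      simpa [overT] using tle.node_left cr ihl
    exact h1.trans (by simpa [overT] using tle.rotate a (overT b cl) cr)

lemma node_under_le (b c : PBT) : ∀ a, tle (node (under a b) c) (under a (node b c)) := by
  intro a
  induction a with
  | leaf => exact tle.refl _
  | node al ar ihl ihr =>
    have h1 : tle (node (under (node al ar) b) c) (node al (node (under ar b) c)) := by
      simpa [under] using tle.rotate al (under ar b) c
    exact h1.trans (by simpa [under] using tle.node_right al ihr)

/-- The hard direction: pointwise vector domination implies Tamari comparability. -/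
lemma vec_tle : ∀ (v u : PBT), deg u = deg v →
    (∀ i, (toVec v).getD i 0 ≤ (toVec u).getD i 0) → tle u v := by
  intro v
  induction v with
  | leaf =>
    intro u hd _
    have h : u = leaf := deg_eq_zero_iff.mp (by simpa [deg] using hd)
    rw [h]
    exact tle.refl _
  | node vl vr ihl ihr =>
    intro u hd hvec
    have hdiagv : (toVec (node vl vr)).getD (deg vl) 0 = deg vl := by
      rw [toVec, getD_split, length_toVec, if_neg (lt_irrefl _), if_pos rfl]
    have hup : (toVec u).getD (deg vl) 0 = deg vl := by
      have h1 := hvec (deg vl)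
      rw [hdiagv] at h1
      exact le_antisymm (vecA u _) h1
    have hplt : deg vl < deg u := by rw [hd]; simp only [deg]; omega
    obtain ⟨L, R, S, hu, hL⟩ := spine u (deg vl) hplt hup
    subst hu
    obtain ⟨w, hw, hprop⟩ := over_toVec_G S L R
    rw [hw, toVec] at hvec
    obtain ⟨hvl, -, hwr⟩ :=
      ptwise_split (by rw [length_toVec, length_toVec, hL]) hvec
    have hvr : ∀ i, (toVec vr).getD i 0 ≤ (toVec (overT R S)).getD i 0 := by
      intro i
      rcases hprop i with hc | hc
      · rw [← hc]; exact hwr i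
      · rw [hc]; exact vecA vr i
    have hdegRS : deg (overT R S) = deg vr := by
      rw [deg_over] at hd ⊢
      simp [deg] at hd
      omega
    exact ((over_node_le L R S).trans
      (tle.node_left _ (ihl L hL hvl))).trans (tle.node_right _ (ihr _ hdegRS hvr))

lemma tle_iff {u v : PBT} :
    tle u v ↔ deg u = deg v ∧ ∀ i, (toVec v).getD i 0 ≤ (toVec u).getD i 0 :=
  ⟨fun h => ⟨tle_deg h, tle_vec h⟩, fun ⟨h1, h2⟩ => vec_tle v u h1 h2⟩

lemma tle_antisymm {u v : PBT} (h1 : tle u v) (h2 : tle v u) : u = v := by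
  apply toVec_inj
  apply List.ext_getElem (by rw [length_toVec, length_toVec, tle_deg h1])
  intro i hi1 hi2
  have := le_antisymm (tle_vec h2 i) (tle_vec h1 i)
  rwa [List.getD_eq_getElem _ _ hi1, List.getD_eq_getElem _ _ hi2] at this

lemma toVec_node (l r : PBT) : toVec (node l r) = toVec l ++ deg l :: toVec r := rfl

lemma diag_node (l r : PBT) : (toVec (node l r)).getD (deg l) 0 = deg l := by
  rw [toVec_node, getD_split, length_toVec, if_neg (lt_irrefl _), if_pos rfl]

lemma sum_leaf (y : PBT) : sum leaf y = {y} := by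
  ext z
  simp only [sum, Set.mem_setOf_eq, leaf_over, Set.mem_singleton_iff]
  show tle y z ∧ tle z y ↔ z = y
  exact ⟨fun ⟨h1, h2⟩ => tle_antisymm h2 h1, fun h => by rw [h]; exact ⟨tle.refl y, tle.refl y⟩⟩

lemma sum_leaf' (x : PBT) : sum x leaf = {x} := by
  ext z
  simp only [sum, Set.mem_setOf_eq, Set.mem_singleton_iff]
  show tle (overT x leaf) z ∧ tle z (under x leaf) ↔ z = x
  rw [under_leaf]
  show tle x z ∧ tle z x ↔ z = x
  exact ⟨fun ⟨h1, h2⟩ => tle_antisymm h2 h1, fun h => by rw [h]; exact ⟨tle.refl x, tle.refl x⟩⟩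

lemma mem_sum_deg {x y z : PBT} (h : z ∈ sum x y) : deg z = deg x + deg y := by
  obtain ⟨h1, _⟩ := h
  rw [← tle_deg h1, deg_over]

lemma mem_sum_left {xl xr y w : PBT} (h : w ∈ sum xr y) :
    node xl w ∈ sum (node xl xr) y := by
  obtain ⟨h1, h2⟩ := h
  exact ⟨(over_node_le xl xr y).trans (tle.node_right _ h1), tle.node_right _ h2⟩

lemma mem_sum_right {x yl yr w : PBT} (h : w ∈ sum x yl) :
    node w yr ∈ sum x (node yl yr) := by
  obtain ⟨h1, h2⟩ := h
  exact ⟨tle.node_left _ h1, (tle.node_left _ h2).trans (node_under_le yl yr x)⟩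

/-- Root dichotomy for membership in a sum of two non-leaf trees. -/
lemma dich {xl xr yl yr zl zr : PBT}
    (h : node zl zr ∈ sum (node xl xr) (node yl yr)) :
    (zl = xl ∧ zr ∈ sum xr (node yl yr)) ∨
    (zr = yr ∧ zl ∈ sum (node xl xr) yl) := by
  obtain ⟨h1, h2⟩ := h
  have hv1 := tle_vec h1
  have hv2 := tle_vec h2
  have hdegz : deg zl + deg zr + 1 = deg (node xl xr) + deg (node yl yr) := by
    have := tle_deg h1
    rw [deg_over] at this
    simp only [deg] at this ⊢
    omega
  have hdx : deg (node xl xr) = deg xl + deg xr + 1 := rfl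
  have hdy : deg (node yl yr) = deg yl + deg yr + 1 := rfl
  -- vector shapes
  have hover : toVec (overT (node xl xr) (node yl yr)) =
      toVec (overT (node xl xr) yl) ++ (deg (node xl xr) + deg yl) :: toVec yr := by
    show toVec (node (overT (node xl xr) yl) yr) = _
    rw [toVec_node, deg_over]
  have hunder : toVec (under (node xl xr) (node yl yr)) =
      (toVec (node xl xr) ++ toVec yl) ++ deg yl :: toVec yr := by
    rw [under_toVec, toVec_node yl yr, ← List.append_assoc]
  have hunder2 : toVec (under (node xl xr) (node yl yr)) =
      toVec xl ++ deg xl :: (toVec xr ++ toVec (node yl yr)) := by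
    rw [under_toVec, toVec_node xl xr, List.append_assoc, List.cons_append]
  obtain ⟨w, hG, hGp⟩ := over_toVec_G (node yl yr) xl xr
  have hza : (toVec (node zl zr)).getD (deg zl) 0 = deg zl := diag_node zl zr
  -- Step 1
  have step1 : deg zl ≤ deg (node xl xr) + deg yl := by
    by_contra hcon
    push_neg at hcon
    have hstrict : (toVec (node (overT (node xl xr) yl) yr)).getD (deg zl) 0 < deg zl := by
      apply vecStrict
      rw [deg_over]; omega
    have := hv1 (deg zl)
    rw [hza] at this
    rw [show overT (node xl xr) (node yl yr) = node (overT (node xl xr) yl) yr from rfl] at this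
    omega
  -- Step 2
  have step2 : deg xl ≤ deg zl := by
    by_contra hcon
    push_neg at hcon
    have h1' := hv2 (deg xl)
    have e : (toVec (under (node xl xr) (node yl yr))).getD (deg xl) 0 = deg xl := by
      rw [hunder2, getD_split, length_toVec, if_neg (lt_irrefl _), if_pos rfl]
    rw [e] at h1'
    have := vecStrict zl zr (deg xl) hcon
    omega
  -- Step 3
  have step3 : ¬(deg xl < deg zl ∧ deg zl < deg (node xl xr)) := by
    rintro ⟨hc1, hc2⟩
    obtain ⟨w2, hw2⟩ := over_toVec_pre (node yl yr) (node xl xr)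
    have hxa : (toVec (overT (node xl xr) (node yl yr))).getD (deg zl) 0 =
        (toVec (node xl xr)).getD (deg zl) 0 := by
      rw [hw2, List.getD_append _ _ _ _ (by rw [length_toVec]; omega)]
    have hxstrict : (toVec (node xl xr)).getD (deg zl) 0 < deg zl :=
      vecStrict xl xr (deg zl) hc1
    have := hv1 (deg zl)
    rw [hza, hxa] at this
    omega
  -- Step 4
  have step4 : ¬(deg (node xl xr) ≤ deg zl ∧ deg zl < deg (node xl xr) + deg yl) := by
    rintro ⟨hc1, hc2⟩
    have h1' := hv2 (deg (node xl xr) + deg yl)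
    have e1 : (toVec (under (node xl xr) (node yl yr))).getD
        (deg (node xl xr) + deg yl) 0 = deg yl := by
      rw [hunder, getD_split]
      rw [show (toVec (node xl xr) ++ toVec yl).length = deg (node xl xr) + deg yl by
        simp [List.length_append, length_toVec]]
      rw [if_neg (lt_irrefl _), if_pos rfl]
    have e2 : (toVec (node zl zr)).getD (deg (node xl xr) + deg yl) 0 ≤
        deg (node xl xr) + deg yl - deg zl - 1 := by
      rw [toVec_node, getD_split, length_toVec, if_neg (by omega), if_neg (by omega)]
      exact vecA zr _
    rw [e1] at h1'
    omega
  have hcases : deg zl = deg xl ∨ deg zl = deg (node xl xr) + deg yl := by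
    rw [hdx] at *
    omega
  rcases hcases with hap | hanq
  · -- left case
    left
    rw [hG, toVec_node zl zr] at hv1
    obtain ⟨hzl_le, -, hzr_le⟩ :=
      ptwise_split (by rw [length_toVec, length_toVec]; omega) hv1
    rw [hunder2, toVec_node zl zr] at hv2
    obtain ⟨hxl_le, -, hur_le⟩ :=
      ptwise_split (by rw [length_toVec, length_toVec]; omega) hv2
    have hzlxl : zl = xl := by
      apply tle_antisymm
      · exact tle_iff.mpr ⟨by omega, hxl_le⟩
      · exact tle_iff.mpr ⟨by omega, hzl_le⟩
    refine ⟨hzlxl, ?_, ?_⟩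
    · apply tle_iff.mpr
      constructor
      · rw [deg_over]; omega
      · intro i
        rcases hGp i with hc | hc
        · rw [← hc]; exact hzr_le i
        · rw [hc]; exact vecA zr i
    · apply tle_iff.mpr
      constructor
      · rw [deg_under]; omega
      · intro i
        have := hur_le i
        rwa [under_toVec]
  · -- right case
    right
    rw [hover, toVec_node zl zr] at hv1
    obtain ⟨hzl_le, -, hzr_le⟩ :=
      ptwise_split (by rw [length_toVec, length_toVec, deg_over]; omega) hv1
    rw [hunder, toVec_node zl zr] at hv2
    obtain ⟨hul_le, -, hyr_le⟩ :=
      ptwise_split (by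
        simp only [List.length_append, length_toVec]; omega) hv2
    have hzryr : zr = yr := by
      apply tle_antisymm
      · exact tle_iff.mpr ⟨by omega, hyr_le⟩
      · exact tle_iff.mpr ⟨by omega, hzr_le⟩
    refine ⟨hzryr, ?_, ?_⟩
    · apply tle_iff.mpr
      exact ⟨by rw [deg_over]; omega, hzl_le⟩
    · apply tle_iff.mpr
      constructor
      · rw [deg_under]; omega
      · intro i
        have := hul_le i
        rwa [under_toVec]

/-- Every tree of degree `n + m` lies in exactly one sum `x + y` with
`deg x = n`, `deg y = m`. -/
lemma exists_unique_sum : ∀ (z : PBT) (n m : ℕ), deg z = n + m →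
    ∃! xy : PBT × PBT, deg xy.1 = n ∧ deg xy.2 = m ∧ z ∈ sum xy.1 xy.2 := by
  intro z
  induction z with
  | leaf =>
    intro n m hdeg
    simp [deg] at hdeg
    obtain ⟨rfl, rfl⟩ := Nat.add_eq_zero.mp hdeg.symm
    refine ⟨(leaf, leaf), ⟨rfl, rfl, ?_⟩, ?_⟩
    · rw [sum_leaf]; rfl
    · rintro ⟨x, y⟩ ⟨h1, h2, h3⟩
      have hx : x = leaf := deg_eq_zero_iff.mp h1
      have hy : y = leaf := deg_eq_zero_iff.mp h2
      simp [hx, hy]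
  | node zl zr ihl ihr =>
    intro n m hdeg
    rcases Nat.eq_zero_or_pos n with hn | hn
    · -- n = 0 : the pair is (leaf, z)
      subst hn
      refine ⟨(leaf, node zl zr), ⟨rfl, by simpa using hdeg, ?_⟩, ?_⟩
      · rw [sum_leaf]; rfl
      · rintro ⟨x, y⟩ ⟨h1, h2, h3⟩
        have hx : x = leaf := deg_eq_zero_iff.mp h1
        subst hx
        rw [sum_leaf] at h3
        simp_all
    rcases Nat.eq_zero_or_pos m with hm | hm
    · -- m = 0 : the pair is (z, leaf)
      subst hm
      refine ⟨(node zl zr, leaf), ⟨by simpa using hdeg, rfl, ?_⟩, ?_⟩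
      · rw [sum_leaf']; rfl
      · rintro ⟨x, y⟩ ⟨h1, h2, h3⟩
        have hy : y = leaf := deg_eq_zero_iff.mp h2
        subst hy
        rw [sum_leaf'] at h3
        simp_all
    -- main case : n, m ≥ 1
    have hdeg' : deg zl + deg zr + 1 = n + m := by simpa [deg] using hdeg
    rcases le_or_gt m (deg zr) with hb | hb
    · -- left case: x = node zl x'
      have hzr : deg zr = (n - deg zl - 1) + m := by omega
      obtain ⟨⟨x', y₀⟩, ⟨hx', hy₀, hmem⟩, huniq⟩ := ihr (n - deg zl - 1) m hzr
      dsimp only at hx' hy₀ hmem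
      refine ⟨(node zl x', y₀), ⟨by simp [deg]; omega, hy₀, mem_sum_left hmem⟩, ?_⟩
      rintro ⟨x, y⟩ ⟨h1, h2, h3⟩
      dsimp only at h1 h2 h3
      rcases x with _ | ⟨xl, xr⟩
      · simp [deg] at h1; omega
      rcases y with _ | ⟨yl, yr⟩
      · simp [deg] at h2; omega
      rcases dich h3 with ⟨hzlxl, hmem'⟩ | ⟨hzryr, hmem'⟩
      · subst hzlxl
        have hd : deg xr = n - deg zl - 1 := by
          simp [deg] at h1; omega
        have := huniq (xr, node yl yr) ⟨hd, h2, hmem'⟩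
        simp only [Prod.mk.injEq] at this ⊢
        exact ⟨by rw [this.1], this.2⟩
      · exfalso
        subst hzryr
        simp [deg] at h2
        omega
    · -- right case: y = node y' zr
      have hzl : deg zl = n + (m - deg zr - 1) := by omega
      obtain ⟨⟨x₀, y'⟩, ⟨hx₀, hy', hmem⟩, huniq⟩ := ihl n (m - deg zr - 1) hzl
      dsimp only at hx₀ hy' hmem
      refine ⟨(x₀, node y' zr), ⟨hx₀, by simp [deg]; omega, mem_sum_right hmem⟩, ?_⟩
      rintro ⟨x, y⟩ ⟨h1, h2, h3⟩
      dsimp only at h1 h2 h3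
      rcases x with _ | ⟨xl, xr⟩
      · simp [deg] at h1; omega
      rcases y with _ | ⟨yl, yr⟩
      · simp [deg] at h2; omega
      rcases dich h3 with ⟨hzlxl, hmem'⟩ | ⟨hzryr, hmem'⟩
      · exfalso
        subst hzlxl
        simp [deg] at h1
        omega
      · subst hzryr
        have hd : deg yl = m - deg zr - 1 := by
          simp [deg] at h2; omega
        have := huniq (node xl xr, yl) ⟨h1, hd, hmem'⟩
        simp only [Prod.mk.injEq] at this ⊢
        exact ⟨this.1, by rw [this.2]⟩

def toTree : PBT → Tree Unit
  | leaf => Tree.nil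
  | node l r => Tree.node () (toTree l) (toTree r)

def ofTree : Tree Unit → PBT
  | BinaryTree.nil => leaf
  | BinaryTree.node _ l r => node (ofTree l) (ofTree r)

lemma toTree_ofTree : ∀ t, toTree (ofTree t) = t := by
  intro t
  induction t with
  | nil => rfl
  | node a l r ihl ihr => simp [ofTree, toTree, ihl, ihr]

lemma numNodes_toTree : ∀ t : PBT, (toTree t).numNodes = deg t := by
  intro t
  induction t with
  | leaf => rfl
  | node l r ihl ihr => simp [toTree, BinaryTree.numNodes, deg, ihl, ihr]

lemma ofTree_toTree : ∀ t : PBT, ofTree (toTree t) = t := by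
  intro t
  induction t with
  | leaf => rfl
  | node l r ihl ihr => simp [toTree, ofTree, ihl, ihr]

lemma deg_ofTree : ∀ t : Tree Unit, deg (ofTree t) = t.numNodes := by
  intro t
  induction t with
  | nil => rfl
  | node a l r ihl ihr => simp [ofTree, deg, BinaryTree.numNodes, ihl, ihr]

lemma ofTree_inj : Function.Injective ofTree :=
  Function.LeftInverse.injective toTree_ofTree

/-- The finite set of all planar binary trees of degree `n`. -/
def treesOf (n : ℕ) : Finset PBT :=
  (Tree.treesOfNumNodesEq n).map ⟨ofTree, ofTree_inj⟩

lemma mem_treesOf {t : PBT} {n : ℕ} : t ∈ treesOf n ↔ deg t = n := by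
  simp only [treesOf, Finset.mem_map, Function.Embedding.coeFn_mk,
    BinaryTree.mem_treesOfNumNodesEq]
  constructor
  · rintro ⟨s, hs, rfl⟩
    rw [deg_ofTree]; exact hs
  · intro h
    exact ⟨toTree t, by rw [← h]; exact numNodes_toTree t, ofTree_toTree t⟩

lemma card_treesOf (n : ℕ) : (treesOf n).card = catalan n := by
  rw [treesOf, Finset.card_map, BinaryTree.treesOfNumNodesEq_card_eq_catalan]

lemma Y_coe (n : ℕ) : Y n = ↑(treesOf n) := by
  ext t
  simp [Y, mem_treesOf]

lemma catalan_factorial (k : ℕ) :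
    Nat.factorial (2 * k) / (Nat.factorial k * Nat.factorial (k + 1)) = catalan k := by
  rw [catalan_eq_centralBinom_div]
  have h1 : (2 * k).factorial = k.factorial * k.factorial * Nat.centralBinom k := by
    rw [Nat.centralBinom]
    have := Nat.choose_mul_factorial_mul_factorial (show k ≤ 2 * k by omega)
    rw [show 2 * k - k = k by omega] at this
    rw [← this]; ring
  rw [h1, Nat.factorial_succ,
    show k.factorial * ((k + 1) * k.factorial) = k.factorial * k.factorial * (k + 1) by ring,
    Nat.mul_div_mul_left _ _ (by positivity)]

end PBT

open PBT in
/-- `Σ_{x ∈ Y_n, y ∈ Y_m} card(x + y) = c_{n+m}` where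
`c_k = (2k)!/(k!(k+1)!)` is the Catalan number. -/
theorem sum_card_sum (n m : ℕ) :
    ∑ᶠ x ∈ Y n, ∑ᶠ y ∈ Y m, (PBT.sum x y).ncard =
      Nat.factorial (2 * (n + m)) /
        (Nat.factorial (n + m) * Nat.factorial (n + m + 1)) := by
  classical
  rw [catalan_factorial (n + m), ← card_treesOf (n + m)]
  rw [Y_coe n, finsum_mem_coe_finset]
  have hinner : ∀ x : PBT, (∑ᶠ y ∈ Y m, (PBT.sum x y).ncard) =
      ∑ y ∈ treesOf m, (PBT.sum x y).ncard := by
    intro x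
    rw [Y_coe m, finsum_mem_coe_finset]
  rw [Finset.sum_congr rfl fun x _ => hinner x]
  -- rewrite each ncard as the cardinality of a filtered finset
  have hcard : ∀ x ∈ treesOf n, ∀ y ∈ treesOf m,
      (PBT.sum x y).ncard = ((treesOf (n + m)).filter (· ∈ PBT.sum x y)).card := by
    intro x hx y hy
    have hset : PBT.sum x y = ↑((treesOf (n + m)).filter (· ∈ PBT.sum x y)) := by
      ext z
      simp only [Finset.coe_filter, Set.mem_setOf_eq, mem_treesOf]
      constructor
      · intro hz
        refine ⟨?_, hz⟩
        rw [mem_sum_deg hz, mem_treesOf.mp hx, mem_treesOf.mp hy]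
      · exact fun h => h.2
    conv_lhs => rw [hset]
    exact Set.ncard_coe_finset _
  rw [Finset.sum_congr rfl fun x hx =>
    Finset.sum_congr rfl fun y hy => hcard x hx y hy]
  -- double counting
  have hswap : ∑ x ∈ treesOf n, ∑ y ∈ treesOf m,
      ((treesOf (n + m)).filter (· ∈ PBT.sum x y)).card =
      ∑ z ∈ treesOf (n + m), ∑ x ∈ treesOf n, ∑ y ∈ treesOf m,
        (if z ∈ PBT.sum x y then 1 else 0) := by
    simp_rw [Finset.card_filter]
    have h1 : ∀ x : PBT, (∑ y ∈ treesOf m, ∑ z ∈ treesOf (n + m),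
        (if z ∈ PBT.sum x y then 1 else 0)) =
        ∑ z ∈ treesOf (n + m), ∑ y ∈ treesOf m, (if z ∈ PBT.sum x y then 1 else 0) :=
      fun x => Finset.sum_comm
    rw [Finset.sum_congr rfl fun x _ => h1 x, Finset.sum_comm]
  rw [hswap]
  have hone : ∀ z ∈ treesOf (n + m),
      (∑ x ∈ treesOf n, ∑ y ∈ treesOf m, (if z ∈ PBT.sum x y then 1 else 0)) = 1 := by
    intro z hz
    have hdz : deg z = n + m := mem_treesOf.mp hz
    obtain ⟨⟨x₀, y₀⟩, ⟨hx₀, hy₀, hmem⟩, huniq⟩ := exists_unique_sum z n m hdz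
    dsimp only at hx₀ hy₀ hmem
    rw [← Finset.sum_product']
    rw [show (∑ p ∈ treesOf n ×ˢ treesOf m, if z ∈ PBT.sum p.1 p.2 then 1 else 0) =
      ((treesOf n ×ˢ treesOf m).filter (fun p => z ∈ PBT.sum p.1 p.2)).card from
      (Finset.card_filter _ _).symm]
    rw [Finset.card_eq_one]
    refine ⟨(x₀, y₀), ?_⟩
    ext ⟨x, y⟩
    simp only [Finset.mem_filter, Finset.mem_product, mem_treesOf,
      Finset.mem_singleton, Prod.mk.injEq]
    constructor
    · rintro ⟨⟨h1, h2⟩, h3⟩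
      have := huniq (x, y) ⟨h1, h2, h3⟩
      simpa [Prod.ext_iff] using this
    · rintro ⟨rfl, rfl⟩
      exact ⟨⟨hx₀, hy₀⟩, hmem⟩
  rw [Finset.sum_congr rfl hone]
  simp
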